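/- If J = [[a, c],[c̄, b]] is a positive semidefinite 2×2 Hermitian matrix (a, b ∈ ℝ, c ∈ ℂ), then the quaternion q = (a+b) + 2Im(c)i + (a−b)j + 2Re(c)k belongs to H_S. -/

import Mathlib

open Matrix ComplexOrder

def HS : Set (Quaternion ℝ) :=
  {q | 0 ≤ q.re ∧ q.imI ^ 2 + q.imJ ^ 2 + q.imK ^ 2 ≤ q.re ^ 2}

/-- If `J = [[a, c],[c̄, b]]` is positive semidefinite, then
`q = (a+b) + 2 Im(c) i + (a−b) j + 2 Re(c) k ∈ H_S`. -/
theorem fromJ_posSemidef_mem_HS (a b : ℝ) (c : ℂ)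
    (hJ : (!![(a : ℂ), c; (starRingEnd ℂ) c, (b : ℂ)] :
      Matrix (Fin 2) (Fin 2) ℂ).PosSemidef) :
    (⟨a + b, 2 * c.im, a - b, 2 * c.re⟩ : Quaternion ℝ) ∈ HS := by
  set K : ℝ := c.re ^ 2 + c.im ^ 2 with hK
  have ha : (0 : ℂ) ≤ a := by
    have := hJ.dotProduct_mulVec_nonneg ![1, 0]
    simpa [dotProduct, Matrix.mulVec, Fin.sum_univ_two] using this
  have hb : (0 : ℂ) ≤ b := by
    have := hJ.dotProduct_mulVec_nonneg ![0, 1]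
    simpa [dotProduct, Matrix.mulVec, Fin.sum_univ_two] using this
  have ha' : 0 ≤ a := by exact_mod_cast ha
  have hb' : 0 ≤ b := by exact_mod_cast hb
  have hK0 : 0 ≤ K := by positivity
  have hQ : ∀ t : ℝ, 0 ≤ a * (t * t) + (-2 * K) * t + b * K := by
    intro t
    have h := hJ.dotProduct_mulVec_nonneg ![(t : ℂ), -(starRingEnd ℂ) c]
    have h' := h.1
    simp [dotProduct, Matrix.mulVec, Fin.sum_univ_two, Complex.ext_iff,
      Complex.add_re, Complex.mul_re, Complex.mul_im] at h'
    rw [hK]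
    nlinarith [h']
  have hdisc := discrim_le_zero hQ
  rw [discrim] at hdisc
  have habK : K ^ 2 ≤ a * b * K := by nlinarith
  have hKab : K ≤ a * b := by nlinarith [habK, hK0, mul_nonneg ha' hb', sq_nonneg (K - a * b)]
  constructor
  · simp only [QuaternionAlgebra.re]; linarith
  · simp only [QuaternionAlgebra.imI, QuaternionAlgebra.imJ, QuaternionAlgebra.imK, QuaternionAlgebra.re]
    nlinarith
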